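/- Let α ∈ [0,1] and let m, n, t be natural numbers with t ≥ n + m. Then the absolute value of the m-th forward difference of the sequence X = (1, α, α², ..., α^{t-1}) at index n equals α^n·(1−α)^m, and is bounded above by (m/(n+m))^m · (n/(n+m))^n. -/

import Mathlib

/-- Forward difference of a sequence. -/
def fdiff (X : ℕ → ℝ) : ℕ → ℝ := fun k => X (k + 1) - X k

lemma fdiff_geom (α : ℝ) (m : ℕ) :
    fdiff^[m] (fun k => α ^ k) = fun k => α ^ k * (α - 1) ^ m := by
  induction m with
  | zero => simp
  | succ m ih =>
    rw [Function.iterate_succ_apply', ih]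
    funext k
    simp only [fdiff, pow_succ]
    ring

lemma key (a b : ℝ) (ha : 0 ≤ a) (hb : 0 ≤ b) (hab : a + b = 1) (n m : ℕ)
    (hn : 0 < n) (hm : 0 < m) :
    a ^ n * b ^ m ≤ ((n : ℝ) / (n + m)) ^ n * ((m : ℝ) / (n + m)) ^ m := by
  set s : ℝ := (n : ℝ) + m with hs_def
  have hn' : (0:ℝ) < n := Nat.cast_pos.mpr hn
  have hm' : (0:ℝ) < m := Nat.cast_pos.mpr hm
  have hs : 0 < s := by positivity
  have hp₁ : 0 ≤ a * s / n := by positivity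
  have hp₂ : 0 ≤ b * s / m := by positivity
  have h := Real.geom_mean_le_arith_mean2_weighted
    (by positivity : (0:ℝ) ≤ (n:ℝ)/s) (by positivity : (0:ℝ) ≤ (m:ℝ)/s)
    hp₁ hp₂ (by field_simp; exact hs_def.symm)
  have hsum : (n:ℝ)/s * (a * s / n) + (m:ℝ)/s * (b * s / m) = 1 := by
    field_simp
    linear_combination hab
  rw [hsum] at h
  have h2 : (a * s / n) ^ n * (b * s / m) ^ m ≤ 1 := by
    have := Real.rpow_le_rpow (by positivity) h hs.le
    rw [Real.one_rpow, Real.mul_rpow (by positivity) (by positivity),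
      ← Real.rpow_mul hp₁, ← Real.rpow_mul hp₂,
      div_mul_cancel₀ _ hs.ne', div_mul_cancel₀ _ hs.ne',
      Real.rpow_natCast, Real.rpow_natCast] at this
    exact this
  have expand : a ^ n * b ^ m =
      ((a * s / n) ^ n * (b * s / m) ^ m) * (((n:ℝ)/s) ^ n * ((m:ℝ)/s) ^ m) := by
    rw [div_pow, div_pow, div_pow, div_pow, mul_pow, mul_pow]
    field_simp
  rw [expand]
  calc ((a * s / n) ^ n * (b * s / m) ^ m) * (((n:ℝ)/s) ^ n * ((m:ℝ)/s) ^ m)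
      ≤ 1 * (((n:ℝ)/s) ^ n * ((m:ℝ)/s) ^ m) := by
        apply mul_le_mul_of_nonneg_right h2 (by positivity)
    _ = ((n:ℝ)/s) ^ n * ((m:ℝ)/s) ^ m := one_mul _

theorem stmt_2 (α : ℝ) (hα : α ∈ Set.Icc (0 : ℝ) 1) (m n t : ℕ) (ht : n + m ≤ t) :
    |fdiff^[m] (fun k => α ^ k) n| = α ^ n * (1 - α) ^ m ∧
    |fdiff^[m] (fun k => α ^ k) n| ≤
      ((m : ℝ) / (n + m)) ^ m * ((n : ℝ) / (n + m)) ^ n := by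
  obtain ⟨h0, h1⟩ := hα
  have heq : |fdiff^[m] (fun k => α ^ k) n| = α ^ n * (1 - α) ^ m := by
    rw [fdiff_geom]
    simp only [abs_mul, abs_pow, abs_of_nonneg h0, abs_of_nonpos (by linarith : α - 1 ≤ 0),
      neg_sub]
  refine ⟨heq, ?_⟩
  rw [heq]
  rcases Nat.eq_zero_or_pos n with hn | hn
  · subst hn
    rcases Nat.eq_zero_or_pos m with hm | hm
    · subst hm; simp
    · simp only [Nat.cast_zero, zero_add, pow_zero, one_mul, mul_one]
      rw [div_self (by positivity : (m:ℝ) ≠ 0), one_pow]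
      exact pow_le_one₀ (by linarith) (by linarith)
  · rcases Nat.eq_zero_or_pos m with hm | hm
    · subst hm
      simp only [Nat.cast_zero, add_zero, pow_zero, one_mul, mul_one]
      rw [div_self (by positivity : (n:ℝ) ≠ 0), one_pow]
      exact pow_le_one₀ h0 h1
    · have := key α (1 - α) h0 (by linarith) (by ring) n m hn hm
      exact this.trans_eq (mul_comm _ _)
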